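/- Let G and H be permutation groups on a finite set Ω, and let k and ℓ be integers with 0 ≤ k ≤ ℓ and k + ℓ ≤ |Ω|. If G and H have the same orbits on the ℓ-element subsets of Ω, then G and H have the same orbits on the k-element subsets of Ω. -/

import Mathlib

open Pointwise MulAction

/-- The invariance group `G(R)` of an unordered relation `R` on `Ω`:
all permutations `g` such that `x ∈ R` implies `g • x ∈ R`. -/
def invGroup {Ω : Type*} [Fintype Ω] [DecidableEq Ω] (R : Set (Finset Ω)) :
    Subgroup (Equiv.Perm Ω) where
  carrier := {g | ∀ x ∈ R, g • x ∈ R}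
  one_mem' := fun x hx => by simpa using hx
  mul_mem' := fun ha hb x hx => by rw [mul_smul]; exact ha _ (hb _ hx)
  inv_mem' := by
    intro g hg x hx
    have himg : (fun y : Finset _ => g • y) '' R ⊆ R := by
      rintro - ⟨y, hy, rfl⟩; exact hg y hy
    have heq : (fun y : Finset _ => g • y) '' R = R := by
      apply Set.eq_of_subset_of_ncard_le himg _ (Set.toFinite R)
      rw [Set.ncard_image_of_injective _ (MulAction.injective g)]
    rw [← heq] at hx
    obtain ⟨y, hy, hxy⟩ := hx
    have : g⁻¹ • x = y := by rw [← hxy]; simp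
    rwa [this]

/-- A permutation group on `Ω` is a relation group if it is the invariance group
of some unordered relation on `Ω`. -/
def IsRelationGroup {Ω : Type*} [Fintype Ω] [DecidableEq Ω]
    (G : Subgroup (Equiv.Perm Ω)) : Prop :=
  ∃ R : Set (Finset Ω), G = invGroup R

/-- `w` is a regular set for `G`: only the identity of `G` stabilizes `w` setwise. -/
def IsRegularSet {Ω : Type*} [DecidableEq Ω] (G : Subgroup (Equiv.Perm Ω))
    (w : Finset Ω) : Prop :=
  ∀ g ∈ G, g • w = w → g = 1

/-- The arity of a relation: the set of cardinalities of its members. -/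
def arity {Ω : Type*} (R : Set (Finset Ω)) : Set ℕ := {n | ∃ x ∈ R, x.card = n}

/-- `G` is orbit closed: every permutation mapping each finite subset into its
`G`-orbit already lies in `G`. -/
def IsOrbitClosed {Ω : Type*} [DecidableEq Ω] (G : Subgroup (Equiv.Perm Ω)) : Prop :=
  ∀ g : Equiv.Perm Ω, (∀ x : Finset Ω, ∃ h ∈ G, g • x = h • x) → g ∈ G

/-- `G` is set-transitive: transitive on `k`-element subsets for every `k`. -/
def IsSetTransitive {Ω : Type*} [DecidableEq Ω] (G : Subgroup (Equiv.Perm Ω)) : Prop :=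
  ∀ x y : Finset Ω, x.card = y.card → ∃ g ∈ G, g • x = y

/-- A permutation group is primitive if it is transitive and every block of the
action is trivial (a subsingleton or the whole set). -/
def IsPrimitivePermGroup {Ω : Type*} (G : Subgroup (Equiv.Perm Ω)) : Prop :=
  MulAction.IsPretransitive ↥G Ω ∧
    ∀ B : Set Ω, MulAction.IsBlock ↥G B → B.Subsingleton ∨ B = Set.univ

section LWsection
open Finset
namespace LWaux
variable {Ω : Type*} [Fintype Ω] [DecidableEq Ω]

noncomputable def Uop (f : Finset Ω → ℚ) (x : Finset Ω) : ℚ := ∑ b ∈ x, f (x.erase b)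
noncomputable def Dop (f : Finset Ω → ℚ) (x : Finset Ω) : ℚ := ∑ a ∈ xᶜ, f (insert a x)

lemma adjoint (f g : Finset Ω → ℚ) :
    ∑ x : Finset Ω, Uop f x * g x = ∑ y : Finset Ω, f y * Dop g y := by
  simp only [Uop, Dop, Finset.sum_mul, Finset.mul_sum]
  rw [show (∑ x : Finset Ω, ∑ i ∈ x, f (x.erase i) * g x)
      = ∑ p ∈ (Finset.univ.sigma (fun x : Finset Ω => x)), f (p.1.erase p.2) * g p.1
    from (Finset.sum_sigma Finset.univ (fun x : Finset Ω => x) (fun p => f (p.1.erase p.2) * g p.1)).symm,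
    show (∑ x : Finset Ω, ∑ i ∈ xᶜ, f x * g (insert i x))
      = ∑ p ∈ (Finset.univ.sigma (fun x : Finset Ω => xᶜ)), f p.1 * g (insert p.2 p.1)
    from (Finset.sum_sigma Finset.univ (fun x : Finset Ω => xᶜ) (fun p => f p.1 * g (insert p.2 p.1))).symm]
  apply Finset.sum_nbij' (i := fun p => (⟨p.1.erase p.2, p.2⟩ : Σ _ : Finset Ω, Ω))
    (j := fun p => (⟨insert p.2 p.1, p.2⟩ : Σ _ : Finset Ω, Ω))
  · rintro ⟨x, b⟩ hp
    simp only [Finset.mem_sigma, Finset.mem_univ, true_and] at hp ⊢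
    simp [Finset.notMem_erase]
  · rintro ⟨y, a⟩ hp
    simp only [Finset.mem_sigma, Finset.mem_univ, true_and] at hp ⊢
    simp
  · rintro ⟨x, b⟩ hp
    simp only [Finset.mem_sigma, Finset.mem_univ, true_and] at hp
    simp [Finset.insert_erase hp]
  · rintro ⟨y, a⟩ hp
    simp only [Finset.mem_sigma, Finset.mem_univ, true_and] at hp
    rw [Finset.mem_compl] at hp
    simp [Finset.erase_insert hp]
  · rintro ⟨x, b⟩ hp
    simp only [Finset.mem_sigma, Finset.mem_univ, true_and] at hp
    simp [Finset.insert_erase hp]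
end LWaux
namespace LWaux
variable {Ω : Type*} [Fintype Ω] [DecidableEq Ω]

lemma comm_apply (f : Finset Ω → ℚ) (x : Finset Ω) :
    Dop (Uop f) x - Uop (Dop f) x = ((Fintype.card Ω : ℚ) - 2 * x.card) * f x := by
  have h1 : ∀ a ∈ xᶜ, Uop f (insert a x) = f x + ∑ b ∈ x, f (insert a (x.erase b)) := by
    intro a ha
    rw [Finset.mem_compl] at ha
    rw [Uop, Finset.sum_insert ha, Finset.erase_insert ha]
    congr 1
    refine Finset.sum_congr rfl fun b hb => ?_
    rw [Finset.erase_insert_of_ne (by rintro rfl; exact ha hb)]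
  have h2 : ∀ b ∈ x, Dop f (x.erase b) = f x + ∑ a ∈ xᶜ, f (insert a (x.erase b)) := by
    intro b hb
    rw [Dop, Finset.compl_erase, Finset.sum_insert (by simp [hb]), Finset.insert_erase hb]
  have e1 : Dop (Uop f) x = ∑ a ∈ xᶜ, (f x + ∑ b ∈ x, f (insert a (x.erase b))) :=
    Finset.sum_congr rfl h1
  have e2 : Uop (Dop f) x = ∑ b ∈ x, (f x + ∑ a ∈ xᶜ, f (insert a (x.erase b))) :=
    Finset.sum_congr rfl h2
  have hc : (xᶜ.card : ℚ) = (Fintype.card Ω : ℚ) - x.card := by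
    rw [Finset.card_compl, Nat.cast_sub (by simpa using Finset.card_le_univ x)]
  rw [e1, e2, Finset.sum_add_distrib, Finset.sum_add_distrib, Finset.sum_const,
    Finset.sum_const, Finset.sum_comm, nsmul_eq_mul, nsmul_eq_mul, hc]
  ring

lemma energy (f : Finset Ω → ℚ) :
    ∑ x : Finset Ω, ((Fintype.card Ω : ℚ) - 2 * x.card) * f x * f x
      = ∑ x : Finset Ω, Uop f x * Uop f x - ∑ x : Finset Ω, Dop f x * Dop f x := by
  have e : ∑ x : Finset Ω, ((Fintype.card Ω : ℚ) - 2 * x.card) * f x * f x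
      = ∑ x : Finset Ω, Dop (Uop f) x * f x - ∑ x : Finset Ω, Uop (Dop f) x * f x := by
    rw [← Finset.sum_sub_distrib]
    refine Finset.sum_congr rfl fun x _ => ?_
    rw [← sub_mul, comm_apply]
  rw [e]
  congr 1
  · rw [show ∑ x : Finset Ω, Dop (Uop f) x * f x = ∑ x : Finset Ω, f x * Dop (Uop f) x by
      simp [mul_comm], ← adjoint]
  · exact adjoint (Dop f) f

lemma Uop_inj_step {f : Finset Ω → ℚ}
    (hsupp : ∀ x, f x ≠ 0 → 2 * x.card < Fintype.card Ω)
    (h0 : Uop f = 0) : f = 0 := by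
  have hE := energy f
  rw [h0] at hE
  simp only [Pi.zero_apply, mul_zero, Finset.sum_const_zero, zero_sub] at hE
  have hnn : ∀ x ∈ (Finset.univ : Finset (Finset Ω)),
      0 ≤ ((Fintype.card Ω : ℚ) - 2 * x.card) * f x * f x := by
    intro x _
    by_cases h : f x = 0
    · simp [h]
    · have := hsupp x h
      have h1 : 0 < (Fintype.card Ω : ℚ) - 2 * x.card := by
        have : (2 * x.card : ℚ) < Fintype.card Ω := by exact_mod_cast this
        linarith
      have := mul_self_nonneg (f x)
      nlinarith
  have hle : ∑ x : Finset Ω, ((Fintype.card Ω : ℚ) - 2 * x.card) * f x * f x ≤ 0 := by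
    rw [hE]
    have : 0 ≤ ∑ x : Finset Ω, Dop f x * Dop f x :=
      Finset.sum_nonneg fun x _ => mul_self_nonneg _
    linarith
  have hzero := le_antisymm hle (Finset.sum_nonneg hnn)
  funext x
  simp only [Pi.zero_apply]
  by_contra h
  have hx := (Finset.sum_eq_zero_iff_of_nonneg hnn).mp hzero x (Finset.mem_univ x)
  have h1 : 0 < (Fintype.card Ω : ℚ) - 2 * x.card := by
    have := hsupp x h
    have : (2 * x.card : ℚ) < Fintype.card Ω := by exact_mod_cast this
    linarith
  have h2 : 0 < f x * f x := mul_self_pos.mpr h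
  nlinarith [h1, h2, hx]

end LWaux
namespace LWaux
variable {Ω : Type*} [Fintype Ω] [DecidableEq Ω]

/-- action of a permutation on functions on finsets -/
noncomputable def act (g : Equiv.Perm Ω) (f : Finset Ω → ℚ) : Finset Ω → ℚ :=
  fun x => f (g⁻¹ • x)

lemma smul_erase (g : Equiv.Perm Ω) (x : Finset Ω) (b : Ω) :
    g • x.erase b = (g • x).erase (g b) := by
  simp only [Finset.smul_finset_def]
  exact Finset.image_erase (g.injective) x b

lemma Uop_act (g : Equiv.Perm Ω) (f : Finset Ω → ℚ) :
    Uop (act g f) = act g (Uop f) := by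
  funext x
  simp only [Uop, act]
  refine Finset.sum_nbij' (i := fun b => g⁻¹ b) (j := fun b => g b) ?_ ?_ ?_ ?_ ?_
  · intro b hb
    have : (g⁻¹ : Equiv.Perm Ω) • b ∈ (g⁻¹ : Equiv.Perm Ω) • x :=
      Finset.smul_mem_smul_finset hb
    simpa using this
  · intro b hb
    have : g • b ∈ g • ((g⁻¹ : Equiv.Perm Ω) • x) := Finset.smul_mem_smul_finset hb
    simpa [smul_smul] using this
  · intro b _; simp
  · intro b _; simp
  · intro b hb
    congr 1
    exact smul_erase g⁻¹ x b

lemma act_card (g : Equiv.Perm Ω) (x : Finset Ω) : (g • x).card = x.card :=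
  Finset.card_smul_finset g x

lemma Uop_supp {f : Finset Ω → ℚ} {j : ℕ} (hf : ∀ x, f x ≠ 0 → x.card = j) :
    ∀ x, Uop f x ≠ 0 → x.card = j + 1 := by
  intro x hx
  obtain ⟨b, hb, hfb⟩ : ∃ b ∈ x, f (x.erase b) ≠ 0 := by
    by_contra h
    push_neg at h
    exact hx (Finset.sum_eq_zero h)
  have h1 := hf _ hfb
  rw [Finset.card_erase_of_mem hb] at h1
  have hpos : 0 < x.card := Finset.card_pos.mpr ⟨b, hb⟩
  omega

lemma Uop_sub (f g : Finset Ω → ℚ) : Uop (f - g) = Uop f - Uop g := by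
  funext x
  simp [Uop, Finset.sum_sub_distrib]

lemma Uop_zero : Uop (0 : Finset Ω → ℚ) = 0 := by
  funext x; simp [Uop]

lemma iter_sub (m : ℕ) (f g : Finset Ω → ℚ) :
    Uop^[m] (f - g) = Uop^[m] f - Uop^[m] g := by
  induction m generalizing f g with
  | zero => simp
  | succ m ih => rw [Function.iterate_succ_apply, Function.iterate_succ_apply,
      Function.iterate_succ_apply, Uop_sub, ih]

lemma iter_act (m : ℕ) (g : Equiv.Perm Ω) (f : Finset Ω → ℚ) :
    Uop^[m] (act g f) = act g (Uop^[m] f) := by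
  induction m generalizing f with
  | zero => simp
  | succ m ih => rw [Function.iterate_succ_apply, Function.iterate_succ_apply, Uop_act, ih]

lemma iter_inj (m j : ℕ) {f : Finset Ω → ℚ}
    (hf : ∀ x, f x ≠ 0 → x.card = j)
    (hn : ∀ i < m, 2 * (j + i) < Fintype.card Ω)
    (h0 : Uop^[m] f = 0) : f = 0 := by
  induction m generalizing f j with
  | zero => simpa using h0
  | succ m ih =>
    rw [Function.iterate_succ_apply] at h0
    have hUf : Uop f = 0 :=
      ih (j + 1) (Uop_supp hf) (fun i hi => by
        have := hn (i + 1) (by omega); omega) h0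
    exact Uop_inj_step (fun x hx => by
      have := hf x hx
      have := hn 0 (by omega)
      omega) hUf

end LWaux
namespace LWaux
variable {Ω : Type*} [Fintype Ω] [DecidableEq Ω]

lemma iter_supp (m j : ℕ) {f : Finset Ω → ℚ} (hf : ∀ x, f x ≠ 0 → x.card = j) :
    ∀ x, Uop^[m] f x ≠ 0 → x.card = j + m := by
  induction m generalizing f j with
  | zero => simpa using hf
  | succ m ih =>
    intro x hx
    rw [Function.iterate_succ_apply] at hx
    have := ih (j + 1) (Uop_supp hf) x hx
    omega

lemma core (G H : Subgroup (Equiv.Perm Ω)) (k ℓ : ℕ)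
    (hkl : k ≤ ℓ) (h2l : 2 * ℓ ≤ Fintype.card Ω)
    (horb : ∀ x : Finset Ω, x.card = ℓ →
      MulAction.orbit ↥G x = MulAction.orbit ↥H x) :
    ∀ x : Finset Ω, x.card = k →
      MulAction.orbit ↥H x ⊆ MulAction.orbit ↥G x := by
  classical
  intro x hx y hy
  set f : Finset Ω → ℚ := fun z => if z ∈ MulAction.orbit ↥G x then 1 else 0 with hfdef
  have hcoeG : ∀ (u : ↥G) (z : Finset Ω), (↑u : Equiv.Perm Ω) • z = u • z := fun _ _ => rfl
  have hcoeH : ∀ (u : ↥H) (z : Finset Ω), (↑u : Equiv.Perm Ω) • z = u • z := fun _ _ => rfl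
  have hsuppf : ∀ z, f z ≠ 0 → z.card = k := by
    intro z hz
    by_cases hm : z ∈ MulAction.orbit ↥G x
    · obtain ⟨g, hgz⟩ := MulAction.mem_orbit_iff.mp hm
      rw [← hgz, ← hcoeG, Finset.card_smul_finset]
      exact hx
    · exact absurd (by simp [hfdef, hm]) hz
  have keyG : ∀ (g : ↥G) (z : Finset Ω),
      ((g : Equiv.Perm Ω)⁻¹ • z ∈ MulAction.orbit ↥G x ↔ z ∈ MulAction.orbit ↥G x) := by
    intro g z
    have h1 : (g : Equiv.Perm Ω)⁻¹ • z = g⁻¹ • z := rfl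
    rw [h1]
    conv_rhs => rw [← MulAction.smul_orbit (g := g) (a := x)]
    exact (Set.mem_smul_set_iff_inv_smul_mem).symm
  have hfG : ∀ g : ↥G, act (↑g) f = f := by
    intro g
    funext z
    simp only [act, hfdef, keyG]
  set m := ℓ - k with hm
  set F := Uop^[m] f with hF
  have hFsupp : ∀ z, F z ≠ 0 → z.card = ℓ := by
    intro z hz
    have := iter_supp m k hsuppf z hz
    omega
  have hFG : ∀ g : ↥G, act (↑g) F = F := by
    intro g
    rw [hF, ← iter_act, hfG]
  have hFG' : ∀ (g : ↥G) (z : Finset Ω), F ((g : Equiv.Perm Ω) • z) = F z := by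
    intro g z
    have := congrFun (hFG g⁻¹) z
    simpa [act] using this
  have hFH : ∀ h : ↥H, act (↑h) F = F := by
    intro h
    funext z
    show F ((h : Equiv.Perm Ω)⁻¹ • z) = F z
    by_cases hcz : z.card = ℓ
    · have hmem : (h : Equiv.Perm Ω)⁻¹ • z ∈ MulAction.orbit ↥G z := by
        rw [horb z hcz]
        exact ⟨h⁻¹, rfl⟩
      obtain ⟨g, hg⟩ := MulAction.mem_orbit_iff.mp hmem
      rw [← hg, ← hcoeG, hFG']
    · have h1 : F z = 0 := by
        by_contra hc; exact hcz (hFsupp z hc)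
      have h2 : F ((h : Equiv.Perm Ω)⁻¹ • z) = 0 := by
        by_contra hc
        apply hcz
        have := hFsupp _ hc
        rwa [Finset.card_smul_finset] at this
      rw [h1, h2]
  have hactH : ∀ h : ↥H, act (↑h) f = f := by
    intro h
    have hz : Uop^[m] (act (↑h) f - f) = 0 := by
      rw [iter_sub, iter_act, ← hF, hFH h, sub_self]
    have hsupp' : ∀ z, (act (↑h) f - f) z ≠ 0 → z.card = k := by
      intro z hzz
      by_contra hc
      apply hzz
      have h1 : f z = 0 := by
        by_contra hfz; exact hc (hsuppf z hfz)
      have h2 : act (↑h) f z = 0 := by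
        by_contra hfz
        apply hc
        have := hsuppf _ hfz
        rwa [Finset.card_smul_finset] at this
      simp [h1, h2]
    have := iter_inj m k hsupp' (fun i hi => by omega) hz
    have := sub_eq_zero.mp this
    exact this
  obtain ⟨h, hhy⟩ := MulAction.mem_orbit_iff.mp hy
  have : act (↑h) f ((h : Equiv.Perm Ω) • x) = f ((h : Equiv.Perm Ω) • x) := by
    rw [hactH h]
  have hfx : f ((h : Equiv.Perm Ω) • x) = 1 := by
    rw [← this]
    show f ((h : Equiv.Perm Ω)⁻¹ • (h : Equiv.Perm Ω) • x) = 1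
    rw [inv_smul_smul]
    simp [hfdef, MulAction.mem_orbit_self]
  have : (h : Equiv.Perm Ω) • x ∈ MulAction.orbit ↥G x := by
    by_contra hc
    rw [hfdef] at hfx
    simp [hc] at hfx
  rwa [hcoeH, hhy] at this

end LWaux
namespace LWaux
variable {Ω : Type*} [Fintype Ω] [DecidableEq Ω]

lemma compl_smul (g : Equiv.Perm Ω) (x : Finset Ω) : g • xᶜ = (g • x)ᶜ := by
  have key : ∀ (h : Equiv.Perm Ω) (s : Finset Ω) (a : Ω), a ∈ h • s ↔ h⁻¹ • a ∈ s := by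
    intro h s a
    rw [show h • s = (h⁻¹)⁻¹ • s by simp, Finset.mem_inv_smul_finset_iff]
  ext a
  rw [Finset.mem_compl, key, key, Finset.mem_compl]

lemma orbit_compl (G : Subgroup (Equiv.Perm Ω)) (x y : Finset Ω) :
    y ∈ MulAction.orbit ↥G x ↔ yᶜ ∈ MulAction.orbit ↥G xᶜ := by
  constructor
  · intro hm
    obtain ⟨g, hg⟩ := MulAction.mem_orbit_iff.mp hm
    refine MulAction.mem_orbit_iff.mpr ⟨g, ?_⟩
    show (g : Equiv.Perm Ω) • xᶜ = yᶜ
    rw [compl_smul]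
    exact congrArg (·ᶜ) hg
  · intro hm
    obtain ⟨g, hg⟩ := MulAction.mem_orbit_iff.mp hm
    refine MulAction.mem_orbit_iff.mpr ⟨g, ?_⟩
    have hg' : (g : Equiv.Perm Ω) • xᶜ = yᶜ := hg
    rw [compl_smul] at hg'
    have := congrArg (·ᶜ) hg'
    exact (by simpa using this : (g : Equiv.Perm Ω) • x = y)

theorem final {Ω : Type*} [Fintype Ω] [DecidableEq Ω]
    (G H : Subgroup (Equiv.Perm Ω)) (k ℓ : ℕ) (hkl : k ≤ ℓ)
    (hln : k + ℓ ≤ Fintype.card Ω)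
    (horb : ∀ x : Finset Ω, x.card = ℓ →
      MulAction.orbit ↥G x = MulAction.orbit ↥H x) :
    ∀ x : Finset Ω, x.card = k →
      MulAction.orbit ↥G x = MulAction.orbit ↥H x := by
  by_cases hcase : 2 * ℓ ≤ Fintype.card Ω
  · intro x hxk
    exact Set.Subset.antisymm
      (core H G k ℓ hkl hcase (fun z hz => (horb z hz).symm) x hxk)
      (core G H k ℓ hkl hcase horb x hxk)
  · set ℓ' := Fintype.card Ω - ℓ with hl'
    have hkl' : k ≤ ℓ' := by omega
    have h2l' : 2 * ℓ' ≤ Fintype.card Ω := by omega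
    have horb' : ∀ x : Finset Ω, x.card = ℓ' →
        MulAction.orbit ↥G x = MulAction.orbit ↥H x := by
      intro x hxc
      have hcc : xᶜ.card = ℓ := by
        rw [Finset.card_compl]
        have := Finset.card_le_univ x
        omega
      have hGH := horb xᶜ hcc
      ext y
      rw [orbit_compl G x y, hGH, ← orbit_compl H x y]
    intro x hxk
    exact Set.Subset.antisymm
      (core H G k ℓ' hkl' h2l' (fun z hz => (horb' z hz).symm) x hxk)
      (core G H k ℓ' hkl' h2l' horb' x hxk)

end LWaux

end LWsection

/-- If `G` and `H` have the same orbits on `ℓ`-element subsets and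
`k ≤ ℓ`, `k + ℓ ≤ |Ω|`, then they have the same orbits on `k`-element
subsets. -/
theorem same_orbits_of_smaller {Ω : Type*} [Fintype Ω] [DecidableEq Ω]
    (G H : Subgroup (Equiv.Perm Ω)) (k ℓ : ℕ) (hkl : k ≤ ℓ)
    (hln : k + ℓ ≤ Fintype.card Ω)
    (horb : ∀ x : Finset Ω, x.card = ℓ →
      MulAction.orbit ↥G x = MulAction.orbit ↥H x) :
    ∀ x : Finset Ω, x.card = k →
      MulAction.orbit ↥G x = MulAction.orbit ↥H x :=
  LWaux.final G H k ℓ hkl hln horb
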